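/- Let n, g ≥ 0, let A be a symmetric n×n integer matrix, B a symmetric 2g×2g integer matrix, C an arbitrary n×2g integer matrix, and J_g the standard symplectic 2g×2g integer matrix. Form the symmetric (n+4g)×(n+4g) block matrix M = [[A, C, 0], [Cᵀ, B, J_g], [0, J_gᵀ, 0]]. Then the Monsky sums satisfy λ(M) = 4^g · λ(A). In particular, the Brown invariant of φ_M equals the Brown invariant of φ_A. (This is the algebraic content of the chromatic duality theorem relating the two Brown invariants of a link.) -/

import Mathlib

open Matrix

/-- The `{0,1}`-valued integer lift of a mod-2 vector. -/
def zlift {ι : Type*} (v : ι → ZMod 2) : ι → ℤ := fun i => ((v i).val : ℤ)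

/-- The integral quadratic form `q_M(v) = ṽᵀ M ṽ` evaluated on the `{0,1}` lift of `v`. -/
def qForm {ι : Type*} [Fintype ι] (M : Matrix ι ι ℤ) (v : ι → ZMod 2) : ℤ :=
  ∑ i, ∑ j, zlift v i * M i j * zlift v j

/-- The Monsky sum `λ(M) = Σ_{v ∈ (ℤ/2)ⁿ} i^{q_M(v)}`. -/
noncomputable def monsky {ι : Type*} [Fintype ι] [DecidableEq ι] (M : Matrix ι ι ℤ) : ℂ :=
  ∑ v : ι → ZMod 2, Complex.I ^ qForm M v

/-- The standard symplectic `2g×2g` integer matrix `J_g = [[0, I], [-I, 0]]`. -/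
def symplecticJ (g : ℕ) : Matrix (Fin g ⊕ Fin g) (Fin g ⊕ Fin g) ℤ :=
  Matrix.fromBlocks 0 1 (-1) 0

set_option linter.unusedSectionVars false

section aux

variable {ι κ : Type*} [Fintype ι] [Fintype κ]

/-- auxiliary bilinear pairing -/
def bil (C : Matrix ι κ ℤ) (x : ι → ZMod 2) (y : κ → ZMod 2) : ℤ :=
  ∑ i, ∑ j, zlift x i * C i j * zlift y j

lemma zlift_zero (i : ι) : zlift (0 : ι → ZMod 2) i = 0 := rfl

lemma qForm_zero_vec (M : Matrix ι ι ℤ) : qForm M 0 = 0 := by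
  simp [qForm, zlift]

lemma bil_zero_right (C : Matrix ι κ ℤ) (x : ι → ZMod 2) : bil C x 0 = 0 := by
  simp [bil, zlift]

lemma bil_zero_matrix (x : ι → ZMod 2) (y : κ → ZMod 2) : bil (0 : Matrix ι κ ℤ) x y = 0 := by
  simp [bil]

lemma bil_transpose (C : Matrix ι κ ℤ) (x : ι → ZMod 2) (y : κ → ZMod 2) :
    bil Cᵀ y x = bil C x y := by
  rw [bil, Finset.sum_comm]
  refine Finset.sum_congr rfl fun i _ => Finset.sum_congr rfl fun j _ => ?_
  simp [transpose_apply]; ring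

lemma qForm_fromBlocks (A : Matrix ι ι ℤ) (C : Matrix ι κ ℤ) (D : Matrix κ ι ℤ)
    (B : Matrix κ κ ℤ) (x : ι → ZMod 2) (y : κ → ZMod 2) :
    qForm (fromBlocks A C D B) (Sum.elim x y)
      = qForm A x + bil C x y + bil D y x + qForm B y := by
  simp only [qForm, bil, Fintype.sum_sum_type, zlift, Sum.elim_inl, Sum.elim_inr,
    fromBlocks_apply₁₁, fromBlocks_apply₁₂, fromBlocks_apply₂₁, fromBlocks_apply₂₂,
    Finset.sum_add_distrib]
  ring

lemma bil_fromColumns (C₁ : Matrix ι κ ℤ) (C₂ : Matrix ι κ ℤ) (x : ι → ZMod 2)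
    (y z : κ → ZMod 2) :
    bil (fromCols C₁ C₂) x (Sum.elim y z) = bil C₁ x y + bil C₂ x z := by
  simp only [bil, Fintype.sum_sum_type, zlift, Sum.elim_inl, Sum.elim_inr,
    fromCols_apply_inl, fromCols_apply_inr, Finset.sum_add_distrib]

lemma bil_fromRows (C₁ : Matrix ι κ ℤ) (C₂ : Matrix ι κ ℤ) (x y : ι → ZMod 2)
    (z : κ → ZMod 2) :
    bil (fromRows C₁ C₂) (Sum.elim x y) z = bil C₁ x z + bil C₂ y z := by
  simp only [bil, Fintype.sum_sum_type, zlift, Sum.elim_inl, Sum.elim_inr,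
    fromRows_apply_inl, fromRows_apply_inr]

lemma zpow_sum' (a : ℂ) (ha : a ≠ 0) (s : Finset κ) (t : κ → ℤ) :
    a ^ (∑ j ∈ s, t j) = ∏ j ∈ s, a ^ t j := by
  induction s using Finset.cons_induction with
  | empty => simp
  | cons j s hj ih => rw [Finset.sum_cons, Finset.prod_cons, zpow_add₀ ha, ih]

lemma sum_zmod2 (f : ZMod 2 → ℂ) : (∑ a : ZMod 2, f a) = f 0 + f 1 := by
  have h : (Finset.univ : Finset (ZMod 2)) = {0, 1} := by decide
  rw [h, Finset.sum_insert (by decide), Finset.sum_singleton]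

lemma zmod2_cases (a : ZMod 2) : a = 0 ∨ a = 1 := by revert a; decide

lemma neg_one_zpow_neg (m : ℤ) : (-1 : ℂ) ^ (-m) = (-1 : ℂ) ^ m := by
  rw [_root_.zpow_neg, ← _root_.inv_zpow]
  norm_num

end aux

lemma qForm_zero_matrix {ι : Type*} [Fintype ι] (v : ι → ZMod 2) :
    qForm (0 : Matrix ι ι ℤ) v = 0 := by simp [qForm]

lemma I_zpow_two_mul (c : ℤ) : Complex.I ^ (2 * c) = (-1 : ℂ) ^ c := by
  rw [_root_.zpow_mul]
  congr 1
  rw [show (2 : ℤ) = ((2 : ℕ) : ℤ) from rfl, zpow_natCast, Complex.I_sq]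

lemma I_zpow_split (a b c d : ℤ) :
    Complex.I ^ (a + b + 2 * (c + d))
      = Complex.I ^ a * Complex.I ^ b * (-1 : ℂ) ^ c * (-1 : ℂ) ^ d := by
  rw [zpow_add₀ Complex.I_ne_zero, zpow_add₀ Complex.I_ne_zero, I_zpow_two_mul,
    zpow_add₀ (by norm_num : (-1 : ℂ) ≠ 0)]
  ring

lemma sum_arrow_sum {α β : Type*} [Fintype α] [Fintype β] [DecidableEq α] [DecidableEq β]
    (F : (α ⊕ β → ZMod 2) → ℂ) :
    (∑ v : α ⊕ β → ZMod 2, F v) = ∑ x : α → ZMod 2, ∑ w : β → ZMod 2, F (Sum.elim x w) := by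
  rw [← Equiv.sum_comp (Equiv.sumArrowEquivProdArrow α β (ZMod 2)).symm F,
    Fintype.sum_prod_type]
  rfl

set_option maxHeartbeats 1000000 in
lemma key_zsum (g : ℕ) (y : Fin g ⊕ Fin g → ZMod 2) :
    (∑ z : Fin g ⊕ Fin g → ZMod 2, (-1 : ℂ) ^ bil (symplecticJ g) y z)
      = if y = 0 then (4 : ℂ) ^ g else 0 := by
  classical
  have hb : ∀ z : Fin g ⊕ Fin g → ZMod 2,
      bil (symplecticJ g) y z = ∑ j, (∑ i, zlift y i * symplecticJ g i j) * zlift z j := by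
    intro z
    rw [bil, Finset.sum_comm]
    exact Finset.sum_congr rfl fun j _ => (Finset.sum_mul _ _ _).symm
  set w : Fin g ⊕ Fin g → ℤ := fun j => ∑ i, zlift y i * symplecticJ g i j with hw
  have h1 : (∑ z : Fin g ⊕ Fin g → ZMod 2, (-1 : ℂ) ^ bil (symplecticJ g) y z)
      = ∏ j, (1 + (-1 : ℂ) ^ w j) := by
    calc ∑ z : Fin g ⊕ Fin g → ZMod 2, (-1 : ℂ) ^ bil (symplecticJ g) y z
        = ∑ z : Fin g ⊕ Fin g → ZMod 2, ∏ j, (-1 : ℂ) ^ (w j * ((z j).val : ℤ)) := by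
          refine Finset.sum_congr rfl fun z _ => ?_
          rw [hb, zpow_sum' _ (by norm_num)]
          rfl
      _ = ∏ j, ∑ a : ZMod 2, (-1 : ℂ) ^ (w j * ((a : ZMod 2).val : ℤ)) :=
          (Fintype.prod_sum (fun j (a : ZMod 2) => (-1 : ℂ) ^ (w j * (a.val : ℤ)))).symm
      _ = ∏ j, (1 + (-1 : ℂ) ^ w j) := by
          refine Finset.prod_congr rfl fun j _ => ?_
          rw [sum_zmod2]
          simp [ZMod.val_one]
  have hwl : ∀ k, w (Sum.inl k) = -zlift y (Sum.inr k) := by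
    intro k
    simp [hw, symplecticJ, Fintype.sum_sum_type, Matrix.one_apply, Matrix.neg_apply,
      mul_ite, Finset.sum_ite_eq']
  have hwr : ∀ k, w (Sum.inr k) = zlift y (Sum.inl k) := by
    intro k
    simp [hw, symplecticJ, Fintype.sum_sum_type, Matrix.one_apply, Matrix.neg_apply,
      mul_ite, Finset.sum_ite_eq']
  have h2 : (∏ j, (1 + (-1 : ℂ) ^ w j)) = ∏ i, (1 + (-1 : ℂ) ^ zlift y i) := by
    rw [Fintype.prod_sum_type, Fintype.prod_sum_type, mul_comm]
    congr 1
    · exact Finset.prod_congr rfl fun k _ => by rw [hwr]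
    · exact Finset.prod_congr rfl fun k _ => by rw [hwl, neg_one_zpow_neg]
  rw [h1, h2]
  have hfac : ∀ i, (1 + (-1 : ℂ) ^ zlift y i) = if y i = 0 then 2 else 0 := by
    intro i
    rcases zmod2_cases (y i) with h | h <;> simp [zlift, h, ZMod.val_one] <;> norm_num
  by_cases hy : y = 0
  · subst hy
    rw [if_pos rfl]
    simp only [hfac, Pi.zero_apply, if_pos rfl]
    rw [Finset.prod_const]
    simp only [Finset.card_univ, Fintype.card_sum, Fintype.card_fin]
    rw [pow_add, ← mul_pow]
    norm_num
  · rw [if_neg hy]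
    obtain ⟨i, hi⟩ := Function.ne_iff.mp hy
    refine Finset.prod_eq_zero (Finset.mem_univ i) ?_
    rw [hfac, if_neg (by simpa using hi)]


theorem monsky_chromatic_duality (n g : ℕ)
    (A : Matrix (Fin n) (Fin n) ℤ) (hA : A.IsSymm)
    (B : Matrix (Fin g ⊕ Fin g) (Fin g ⊕ Fin g) ℤ) (hB : B.IsSymm)
    (C : Matrix (Fin n) (Fin g ⊕ Fin g) ℤ) :
    monsky (Matrix.fromBlocks A (Matrix.fromCols C 0) (Matrix.fromRows Cᵀ 0)
        (Matrix.fromBlocks B (symplecticJ g) (symplecticJ g)ᵀ 0))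
      = 4 ^ g * monsky A := by
  classical
  simp only [monsky]
  rw [sum_arrow_sum]
  have step : ∀ x : Fin n → ZMod 2,
      (∑ w : (Fin g ⊕ Fin g) ⊕ (Fin g ⊕ Fin g) → ZMod 2,
        Complex.I ^ qForm (Matrix.fromBlocks A (Matrix.fromCols C 0)
          (Matrix.fromRows Cᵀ 0)
          (Matrix.fromBlocks B (symplecticJ g) (symplecticJ g)ᵀ 0)) (Sum.elim x w))
        = (4 : ℂ) ^ g * Complex.I ^ qForm A x := by
    intro x
    rw [sum_arrow_sum]
    have hq : ∀ (y z : Fin g ⊕ Fin g → ZMod 2),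
        qForm (Matrix.fromBlocks A (Matrix.fromCols C 0) (Matrix.fromRows Cᵀ 0)
            (Matrix.fromBlocks B (symplecticJ g) (symplecticJ g)ᵀ 0))
          (Sum.elim x (Sum.elim y z))
        = qForm A x + qForm B y + 2 * (bil C x y + bil (symplecticJ g) y z) := by
      intro y z
      rw [qForm_fromBlocks, bil_fromColumns, bil_fromRows, qForm_fromBlocks,
        bil_transpose, bil_transpose, bil_zero_matrix, bil_zero_matrix, qForm_zero_matrix]
      ring
    calc ∑ y : Fin g ⊕ Fin g → ZMod 2, ∑ z : Fin g ⊕ Fin g → ZMod 2,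
          Complex.I ^ qForm (Matrix.fromBlocks A (Matrix.fromCols C 0)
            (Matrix.fromRows Cᵀ 0)
            (Matrix.fromBlocks B (symplecticJ g) (symplecticJ g)ᵀ 0))
            (Sum.elim x (Sum.elim y z))
        = ∑ y : Fin g ⊕ Fin g → ZMod 2, ∑ z : Fin g ⊕ Fin g → ZMod 2,
            Complex.I ^ qForm A x * Complex.I ^ qForm B y * (-1 : ℂ) ^ bil C x y
              * (-1 : ℂ) ^ bil (symplecticJ g) y z := by
          refine Finset.sum_congr rfl fun y _ => Finset.sum_congr rfl fun z _ => ?_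
          rw [hq, I_zpow_split]
      _ = ∑ y : Fin g ⊕ Fin g → ZMod 2,
            Complex.I ^ qForm A x * Complex.I ^ qForm B y * (-1 : ℂ) ^ bil C x y
              * (if y = 0 then (4 : ℂ) ^ g else 0) := by
          refine Finset.sum_congr rfl fun y _ => ?_
          rw [← Finset.mul_sum, key_zsum]
      _ = Complex.I ^ qForm A x * Complex.I ^ qForm B 0 * (-1 : ℂ) ^ bil C x 0
            * (4 : ℂ) ^ g := by
          simp_rw [mul_ite, mul_zero]
          rw [Finset.sum_ite_eq' Finset.univ (0 : Fin g ⊕ Fin g → ZMod 2),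
            if_pos (Finset.mem_univ _)]
      _ = (4 : ℂ) ^ g * Complex.I ^ qForm A x := by
          rw [qForm_zero_vec, bil_zero_right, zpow_zero, zpow_zero]
          ring
  calc ∑ x : Fin n → ZMod 2, ∑ w : (Fin g ⊕ Fin g) ⊕ (Fin g ⊕ Fin g) → ZMod 2,
        Complex.I ^ qForm (Matrix.fromBlocks A (Matrix.fromCols C 0)
          (Matrix.fromRows Cᵀ 0)
          (Matrix.fromBlocks B (symplecticJ g) (symplecticJ g)ᵀ 0)) (Sum.elim x w)
      = ∑ x : Fin n → ZMod 2, (4 : ℂ) ^ g * Complex.I ^ qForm A x :=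
        Finset.sum_congr rfl fun x _ => step x
    _ = 4 ^ g * monsky A := by
        rw [← Finset.mul_sum, monsky]
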